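/- arXiv:math/9607227 — 2 statements merged into one kernel-verified Lean document; each statement's English description precedes it below -/
import Mathlib

section
/- (Δ-system lemma) For every family ⟨A_i : i < ω₁⟩ of finite sets there is an uncountable set B ⊆ ω₁ and a finite set R (the root) such that for all distinct i, j ∈ B, A_i ∩ A_j = R. -/
open Set

/-- Auxiliary: bounded-size Δ-system lemma over an arbitrary index type. -/
theorem delta_aux {I : Type*} {α : Type} [DecidableEq α] (n : ℕ) :
    ∀ (S : Set I) (A : I → Finset α), ¬ S.Countable →
      (∀ i ∈ S, (A i).card ≤ n) →
      ∃ B ⊆ S, ¬ B.Countable ∧ ∃ R : Finset α,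
        ∀ i ∈ B, ∀ j ∈ B, i ≠ j → A i ∩ A j = R := by
  induction n with
  | zero =>
    intro S A hS hcard
    refine ⟨S, Subset.rfl, hS, ∅, fun i hi j hj _ => ?_⟩
    have : A i = ∅ := Finset.card_eq_zero.mp (Nat.le_zero.mp (hcard i hi))
    simp [this]
  | succ n ih =>
    intro S A hS hcard
    by_cases hx : ∃ x : α, ¬ {i ∈ S | x ∈ A i}.Countable
    · obtain ⟨x, hx⟩ := hx
      set S' : Set I := {i ∈ S | x ∈ A i} with hS'
      have hcard' : ∀ i ∈ S', ((A i).erase x).card ≤ n := by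
        intro i hi
        have h1 : ((A i).erase x).card = (A i).card - 1 :=
          Finset.card_erase_of_mem hi.2
        have h2 := hcard i hi.1
        omega
      obtain ⟨B, hBS', hB, R, hR⟩ := ih S' (fun i => (A i).erase x) hx hcard'
      refine ⟨B, fun i hi => (hBS' hi).1, hB, insert x R, ?_⟩
      intro i hi j hj hij
      have h := hR i hi j hj hij
      have hxi : x ∈ A i := (hBS' hi).2
      have hxj : x ∈ A j := (hBS' hj).2
      ext a
      by_cases ha : a = x
      · subst ha; simp [hxi, hxj]
      · have := Finset.ext_iff.mp h a
        simp only [Finset.mem_inter, Finset.mem_erase, ha, true_and,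
          not_false_iff] at this
        simp only [Finset.mem_inter, Finset.mem_insert, ha, false_or]
        tauto
    · push_neg at hx
      -- every point is in countably many A i; find uncountable disjoint family
      set 𝒮 : Set (Set I) :=
        {B | B ⊆ S ∧ ∀ i ∈ B, ∀ j ∈ B, i ≠ j → A i ∩ A j = ∅} with h𝒮
      obtain ⟨B, hB𝒮, hBmax⟩ : ∃ B ∈ 𝒮, ∀ C ∈ 𝒮, B ⊆ C → C = B := by
        have := zorn_subset 𝒮 ?_
        · obtain ⟨B, hB⟩ := this
          exact ⟨B, hB.prop, fun C hC hBC => hB.eq_of_ge hC hBC⟩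
        · intro c hc hchain
          refine ⟨⋃₀ c, ⟨?_, ?_⟩, fun s hs => subset_sUnion_of_mem hs⟩
          · exact sUnion_subset fun s hs => (hc hs).1
          · rintro i ⟨s, hs, his⟩ j ⟨t, ht, hjt⟩ hij
            rcases hchain.total hs ht with hst | hts
            · exact (hc ht).2 i (hst his) j hjt hij
            · exact (hc hs).2 i his j (hts hjt) hij
      have hBnc : ¬ B.Countable := by
        intro hBc
        set X : Set α := ⋃ i ∈ B, (A i : Set α) with hX
        have hXc : X.Countable :=
          hBc.biUnion (fun i _ => (A i).countable_toSet)
        set T : Set I := ⋃ x ∈ X, {i ∈ S | x ∈ A i} with hT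
        have hTc : T.Countable := hXc.biUnion (fun x _ => hx x)
        have : ¬ S ⊆ B ∪ T := fun h => hS ((hBc.union hTc).mono h)
        obtain ⟨i₀, hi₀S, hi₀⟩ := not_subset.mp this
        have hi₀B : i₀ ∉ B := fun h => hi₀ (Or.inl h)
        have hi₀T : i₀ ∉ T := fun h => hi₀ (Or.inr h)
        have hnew : insert i₀ B ∈ 𝒮 := by
          refine ⟨insert_subset hi₀S hB𝒮.1, ?_⟩
          have key : ∀ j ∈ B, A i₀ ∩ A j = ∅ := by
            intro j hj
            by_contra hne
            obtain ⟨a, ha⟩ := Finset.nonempty_iff_ne_empty.mpr hne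
            rw [Finset.mem_inter] at ha
            have haX : a ∈ X := mem_biUnion hj (by exact_mod_cast ha.2)
            exact hi₀T (mem_biUnion haX ⟨hi₀S, ha.1⟩)
          rintro i (rfl | hi) j (rfl | hj) hij
          · exact absurd rfl hij
          · exact key j hj
          · rw [Finset.inter_comm]; exact key i hi
          · exact hB𝒮.2 i hi j hj hij
        have := hBmax _ hnew (subset_insert i₀ B)
        exact hi₀B (this ▸ mem_insert i₀ B)
      exact ⟨B, hB𝒮.1, hBnc, ∅, hB𝒮.2⟩


universe u in
theorem univ_lt_aleph1_uncountable :
    ¬ (Set.univ : Set {i : Ordinal.{u} // i < (Cardinal.aleph 1).ord}).Countable := by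
  rw [Set.countable_univ_iff]
  intro hcnt
  have h1 : Cardinal.mk {i : Ordinal.{u} // i < (Cardinal.aleph 1).ord} ≤ Cardinal.aleph0 :=
    Cardinal.mk_le_aleph0
  have h2 : Cardinal.mk {i : Ordinal.{u} // i < (Cardinal.aleph 1).ord}
      = Cardinal.lift.{u+1} (Cardinal.aleph (1 : Ordinal.{u})) := by
    have := Ordinal.mk_Iio_ordinal (Cardinal.aleph (1 : Ordinal.{u})).ord
    rw [Cardinal.card_ord] at this
    exact this
  rw [h2, ← Cardinal.lift_aleph0.{u+1,u}, Cardinal.lift_le] at h1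
  exact absurd h1 (not_le.mpr (Cardinal.aleph0_lt_aleph_one))

/-- Δ-system lemma: any ω₁-indexed family of finite sets has an uncountable
subfamily forming a Δ-system. -/
theorem delta_system_lemma (α : Type)
    [DecidableEq α]
    (A : {i : Ordinal // i < (Cardinal.aleph 1).ord} → Finset α) :
    ∃ B : Set {i : Ordinal // i < (Cardinal.aleph 1).ord}, ¬ B.Countable ∧
      ∃ R : Finset α, ∀ i ∈ B, ∀ j ∈ B, i ≠ j → A i ∩ A j = R := by
  have huniv : ¬ (Set.univ : Set {i : Ordinal // i < (Cardinal.aleph 1).ord}).Countable :=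
    univ_lt_aleph1_uncountable
  -- find n such that the set of indices with card = n is uncountable
  have hex : ∃ n : ℕ, ¬ {i | (A i).card = n}.Countable := by
    by_contra h
    push_neg at h
    have : (Set.univ : Set {i : Ordinal // i < (Cardinal.aleph 1).ord}).Countable := by
      have : (⋃ n : ℕ, {i | (A i).card = n}) = Set.univ := by
        ext i; simp
      rw [← this]
      exact countable_iUnion h
    exact huniv this
  obtain ⟨n, hn⟩ := hex
  obtain ⟨B, _, hBnc, R, hR⟩ :=
    delta_aux n {i | (A i).card = n} A hn (fun i hi => le_of_eq hi)
  exact ⟨B, hBnc, R, hR⟩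
end

section
/- (Generalized Δ-system lemma) Let κ be a regular uncountable cardinal and let λ = (2^{<κ})⁺. For every family ⟨A_i : i < λ⟩ of sets each of cardinality < κ, there is a set B ⊆ λ of cardinality λ such that ⟨A_i : i ∈ B⟩ forms a Δ-system, i.e., there is a set R with A_i ∩ A_j = R for all distinct i, j ∈ B. -/
open Cardinal

open Set Order

namespace DeltaSys

variable {κ : Cardinal.{0}}

lemma kappa_le_mu (hunc : ℵ₀ < κ) : κ ≤ 2 ^< κ := by
  refine le_of_forall_lt fun ν hν => ?_
  exact lt_of_lt_of_le (Cardinal.cantor ν) (Cardinal.le_powerlt 2 hν)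

lemma mu_inf (hunc : ℵ₀ < κ) : ℵ₀ < 2 ^< κ := hunc.trans_le (kappa_le_mu hunc)

lemma lt_mu_iff {a : Cardinal} : a < 2 ^< κ ↔ ∃ c < κ, a < 2 ^ c := by
  constructor
  · intro h
    by_contra hc
    push_neg at hc
    exact absurd (Cardinal.powerlt_le.2 fun c hcκ => (hc c hcκ)) (not_le.2 h)
  · rintro ⟨c, hc, h⟩
    exact h.trans_le (Cardinal.le_powerlt 2 hc)

end DeltaSys

namespace DeltaSys
variable {κ : Cardinal.{0}}

lemma cof_mu (hreg : κ.IsRegular) (hunc : ℵ₀ < κ)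
    (hatt : ∀ c < κ, 2 ^ c < 2 ^< κ) : κ ≤ ((2 ^< κ).ord).cof := by
  set μ := 2 ^< κ with hμ
  by_contra hlt
  push_neg at hlt
  haveI : IsWellOrder μ.ord.ToType (· < ·) := isWellOrder_lt
  obtain ⟨S, hSub, hScard⟩ := Order.exists_cof_eq μ.ord.ToType
  rw [Ordinal.cof_toType] at hScard
  -- choose exponents
  have hIic : ∀ b : μ.ord.ToType, #(Set.Iic b) < μ := by
    intro b
    have h1 : #(Set.Iic b) ≤ #(Set.Iio b) + 1 := by
      have : (Set.Iic b) ⊆ Set.Iio b ∪ {b} := by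
        intro x hx
        rcases lt_or_eq_of_le (Set.mem_Iic.mp hx) with h | h
        · exact Or.inl h
        · exact Or.inr (by simp [h])
      exact (mk_le_mk_of_subset this).trans ((mk_union_le _ _).trans (by rw [mk_singleton]))
    have h2 : #(Set.Iio b) < μ := Cardinal.mk_Iio_ord_toType b
    exact h1.trans_lt (Cardinal.add_lt_of_lt (mu_inf hunc).le h2 (one_lt_aleph0.trans (mu_inf hunc)))
  have hchoice : ∀ b : μ.ord.ToType, ∃ c < κ, #(Set.Iic b) < 2 ^ c := fun b => lt_mu_iff.1 (hIic b)
  choose c hcκ hcb using hchoice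
  -- sup of exponents over S
  set c' : Cardinal := ⨆ b : S, c b with hc'
  have hc'κ : c' < κ := by
    apply Ordinal.iSup_lt
    · rw [hreg.cof_eq, hScard]; exact hlt
    · exact fun b => hcκ b
  have hcover : (Set.univ : Set μ.ord.ToType) ⊆ ⋃ b : S, Set.Iic (b : μ.ord.ToType) := by
    intro a _
    obtain ⟨b, hbS, hba⟩ := hSub a
    exact Set.mem_iUnion.2 ⟨⟨b, hbS⟩, hba⟩
  have hμM : #μ.ord.ToType = μ := by rw [Cardinal.mk_toType, Cardinal.card_ord]
  have : μ ≤ Cardinal.sum fun b : S => #(Set.Iic (b : μ.ord.ToType)) := by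
    calc μ = #μ.ord.ToType := hμM.symm
      _ = #(Set.univ : Set μ.ord.ToType) := mk_univ.symm
      _ ≤ #(⋃ b : S, Set.Iic (b : μ.ord.ToType)) := mk_le_mk_of_subset hcover
      _ ≤ _ := mk_iUnion_le_sum_mk
  have hub : (Cardinal.sum fun b : S => #(Set.Iic (b : μ.ord.ToType))) < μ := by
    calc (Cardinal.sum fun b : S => #(Set.Iic (b : μ.ord.ToType)))
        ≤ Cardinal.sum fun _ : S => 2 ^ c' := by
          apply Cardinal.sum_le_sum
          intro b
          refine (hcb b).le.trans (Cardinal.power_le_power_left two_ne_zero ?_)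
          exact le_ciSup (Cardinal.bddAbove_range _) b
      _ = #S * 2 ^ c' := Cardinal.sum_const' _ _
      _ < μ := by
          apply Cardinal.mul_lt_of_lt (mu_inf hunc).le
          · exact (hScard ▸ hlt).trans_le (kappa_le_mu hunc)
          · exact hatt c' hc'κ
  exact absurd this (not_le.2 hub)

end DeltaSys

namespace DeltaSys
variable {κ : Cardinal.{0}}

lemma pow_le_mu_of_le {a c ν : Cardinal.{0}} (hunc : ℵ₀ < κ) (hc : c < κ) (hν : ν < κ)
    (ha : a ≤ 2 ^ c) : a ^ ν ≤ 2 ^< κ := by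
  calc a ^ ν ≤ (2 ^ c) ^ ν := Cardinal.power_le_power_right ha
    _ = 2 ^ (c * ν) := by rw [Cardinal.power_mul]
    _ ≤ 2 ^< κ := Cardinal.le_powerlt 2 (Cardinal.mul_lt_of_lt hunc.le hc hν)

lemma mu_pow (hreg : κ.IsRegular) (hunc : ℵ₀ < κ) {ν : Cardinal.{0}} (hν : ν < κ) :
    (2 ^< κ) ^ ν ≤ 2 ^< κ := by
  by_cases hatt : ∃ c < κ, (2 ^< κ) ≤ 2 ^ c
  · obtain ⟨c, hc, hle⟩ := hatt
    exact pow_le_mu_of_le hunc hc hν hle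
  · push_neg at hatt
    set μ := 2 ^< κ with hμ
    have hcof : κ ≤ μ.ord.cof := cof_mu hreg hunc hatt
    haveI : IsWellOrder μ.ord.ToType (· < ·) := isWellOrder_lt
    -- μ ^ ν = #(X → M)
    obtain ⟨X, hX⟩ : ∃ X : Type, #X = ν := ⟨ν.out, Cardinal.mk_out ν⟩
    have hpow : μ ^ ν = #(X → μ.ord.ToType) := by
      rw [← Cardinal.power_def, Cardinal.mk_toType, Cardinal.card_ord, hX]
    rw [hpow]
    have hcover : (Set.univ : Set (X → μ.ord.ToType)) ⊆
        ⋃ b : μ.ord.ToType, {f : X → μ.ord.ToType | ∀ x, f x < b} := by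
      intro f _
      have hb : Set.Bounded (· < ·) (Set.range f) := by
        refine not_isCofinal_iff.1 fun hc => (Order.cof_le hc).not_gt ?_
        rw [Ordinal.cof_toType]
        calc #(Set.range f) ≤ #X := mk_range_le
          _ < κ := hX ▸ hν
          _ ≤ μ.ord.cof := hcof
      obtain ⟨b, hb⟩ := hb
      exact Set.mem_iUnion.2 ⟨b, fun x => hb _ (Set.mem_range_self x)⟩
    calc #(X → μ.ord.ToType) = #(Set.univ : Set (X → μ.ord.ToType)) := mk_univ.symm
      _ ≤ #(⋃ b : μ.ord.ToType, {f : X → μ.ord.ToType | ∀ x, f x < b}) :=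
          mk_le_mk_of_subset hcover
      _ ≤ Cardinal.sum fun b : μ.ord.ToType => #{f : X → μ.ord.ToType | ∀ x, f x < b} :=
          mk_iUnion_le_sum_mk
      _ ≤ Cardinal.sum fun _ : μ.ord.ToType => μ := by
          apply Cardinal.sum_le_sum
          intro b
          have hinj : #{f : X → μ.ord.ToType | ∀ x, f x < b} ≤ #(X → Set.Iio b) := by
            apply Cardinal.mk_le_of_injective (f := fun g => fun x => (⟨g.1 x, g.2 x⟩ : Set.Iio b))
            intro g g' h
            apply Subtype.ext
            funext x
            exact congrArg Subtype.val (congrFun h x)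
          refine hinj.trans ?_
          have : #(X → Set.Iio b) = (#(Set.Iio b)) ^ ν := by
            rw [← Cardinal.power_def, hX]
          rw [this]
          obtain ⟨c, hc, hcb⟩ := lt_mu_iff.1 (Cardinal.mk_Iio_ord_toType b)
          exact pow_le_mu_of_le hunc hc hν hcb.le
      _ = #μ.ord.ToType * μ := Cardinal.sum_const' _ _
      _ = μ := by
          rw [Cardinal.mk_toType, Cardinal.card_ord, Cardinal.mul_eq_self (mu_inf hunc).le]

end DeltaSys

namespace DeltaSys
variable {κ : Cardinal.{0}}

lemma count (hreg : κ.IsRegular) (hunc : ℵ₀ < κ) {W : Type} (hW : #W ≤ 2 ^< κ) :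
    #{s : Set W // #s < κ} ≤ 2 ^< κ := by
  haveI : IsWellOrder κ.ord.ToType (· < ·) := isWellOrder_lt
  set μ := 2 ^< κ with hμ
  classical
  set F : (Σ _z : κ.ord.ToType, (↥(Set.Iio _z) → W)) ⊕ PUnit → {s : Set W // #s < κ} :=
    fun p => match p with
      | .inl ⟨z, f⟩ => ⟨Set.range f, lt_of_le_of_lt mk_range_le
          (Cardinal.mk_Iio_ord_toType z)⟩
      | .inr _ => ⟨∅, by rw [mk_emptyCollection]; exact hreg.pos⟩ with hF
  have hsurj : Function.Surjective F := by
    rintro ⟨s, hs⟩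
    rcases Set.eq_empty_or_nonempty s with rfl | hne
    · exact ⟨.inr PUnit.unit, rfl⟩
    · have ho : (#s).ord < κ.ord := Cardinal.ord_lt_ord.2 hs
      set z : κ.ord.ToType := Ordinal.enum (· < ·)
        ⟨(#s).ord, by rw [Ordinal.type_toType]; exact Set.mem_Iio.2 ho⟩ with hz
      have hcard : #(Set.Iio z) = #s := by
        have h1 : #{y : κ.ord.ToType // y < z} =
            (Ordinal.typein ((· < ·) : κ.ord.ToType → κ.ord.ToType → Prop) z).card :=
          Ordinal.card_typein z
        have h2 : Ordinal.typein ((· < ·) : κ.ord.ToType → κ.ord.ToType → Prop) z = (#s).ord :=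
          Ordinal.typein_enum _ _
        rw [h2, Cardinal.card_ord] at h1
        exact h1
      obtain ⟨e⟩ := Cardinal.eq.mp hcard
      refine ⟨.inl ⟨z, fun i => ((e i : s) : W)⟩, ?_⟩
      apply Subtype.ext
      show Set.range _ = s
      ext w
      simp only [Set.mem_range]
      constructor
      · rintro ⟨i, rfl⟩
        exact (e i).2
      · intro hw
        exact ⟨e.symm ⟨w, hw⟩, by simp⟩
  calc #{s : Set W // #s < κ}
      ≤ #((Σ _z : κ.ord.ToType, (↥(Set.Iio _z) → W)) ⊕ PUnit) :=
        Cardinal.mk_le_of_surjective hsurj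
    _ = (Cardinal.sum fun z : κ.ord.ToType => #(↥(Set.Iio z) → W)) + 1 := by
        simp [Cardinal.mk_sigma]
    _ ≤ (Cardinal.sum fun _z : κ.ord.ToType => μ) + 1 := by
        refine add_le_add_left (Cardinal.sum_le_sum _ _ fun z => ?_) 1
        calc #(↥(Set.Iio z) → W) = #W ^ #(Set.Iio z) := (Cardinal.power_def _ _).symm
            _ ≤ μ ^ #(Set.Iio z) := Cardinal.power_le_power_right hW
            _ ≤ μ := mu_pow hreg hunc (Cardinal.mk_Iio_ord_toType z)
    _ = #κ.ord.ToType * μ + 1 := by rw [Cardinal.sum_const' _ _]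
    _ = κ * μ + 1 := by rw [Cardinal.mk_toType, Cardinal.card_ord]
    _ ≤ μ := by
        have h1 : κ * μ ≤ μ := by
          calc κ * μ ≤ μ * μ := by gcongr; exact kappa_le_mu hunc
            _ = μ := Cardinal.mul_eq_self (mu_inf hunc).le
        calc κ * μ + 1 ≤ μ + μ := by
              gcongr
              exact Cardinal.one_le_iff_pos.2 (lt_of_lt_of_le aleph0_pos (mu_inf hunc).le)
          _ = μ := Cardinal.add_eq_self (mu_inf hunc).le
end DeltaSys

namespace DeltaSys
variable {κ : Cardinal.{0}}

lemma bdd {c : Cardinal.{0}} (hc : c.IsRegular) {s : Set c.ord.ToType} (hs : #s < c) :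
    ∃ b : c.ord.ToType, ∀ a ∈ s, a < b := by
  haveI : IsWellOrder c.ord.ToType (· < ·) := isWellOrder_lt
  have := not_isCofinal_iff.1 (fun h => (Order.cof_le h).not_gt
    (by rw [Ordinal.cof_toType, hc.cof_eq]; exact hs))
  exact this

lemma mk_toType_eq (c : Cardinal.{0}) : #c.ord.ToType = c := by
  rw [Cardinal.mk_toType, Cardinal.card_ord]

lemma stepA (hreg : κ.IsRegular) {lam : Cardinal.{0}} (hlreg : lam.IsRegular) (hκl : κ < lam)
    (A : lam.ord.ToType → Set lam.ord.ToType) (hA : ∀ x, #(A x) < κ) :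
    ∃ β, #{x | A x ∩ Set.Iio x ⊆ Set.Iio β} = lam := by
  by_contra hcon
  push_neg at hcon
  have hT : ∀ β : lam.ord.ToType, #{x | A x ∩ Set.Iio x ⊆ Set.Iio β} < lam := by
    intro β
    refine lt_of_le_of_ne ?_ (hcon β)
    exact (mk_le_mk_of_subset (Set.subset_univ _)).trans (by rw [mk_univ, mk_toType_eq])
  -- step function
  have hstep : ∀ b : lam.ord.ToType, ∃ sb : lam.ord.ToType,
      b < sb ∧ ∀ a, A a ∩ Set.Iio a ⊆ Set.Iio b → a < sb := by
    intro b
    obtain ⟨sb, hsb⟩ := bdd hlreg (s := insert b {x | A x ∩ Set.Iio x ⊆ Set.Iio b}) (by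
      refine lt_of_le_of_lt (mk_insert_le) ?_
      exact Cardinal.add_lt_of_lt hlreg.aleph0_le (hT b) (one_lt_aleph0.trans_le hlreg.aleph0_le))
    exact ⟨sb, hsb b (Set.mem_insert _ _), fun a ha => hsb a (Set.mem_insert_of_mem _ ha)⟩
  choose step hstep1 hstep2 using hstep
  -- recursion along κ
  have hF : ∀ (z : κ.ord.ToType) (ih : ∀ y, y < z → lam.ord.ToType),
      ∃ b : lam.ord.ToType, ∀ y (hy : y < z), step (ih y hy) < b := by
    intro z ih
    obtain ⟨b, hb⟩ := bdd hlreg (s := Set.range fun p : Set.Iio z => step (ih p.1 p.2))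
      (mk_range_le.trans_lt ((Cardinal.mk_Iio_ord_toType z).trans hκl))
    exact ⟨b, fun y hy => hb _ ⟨⟨y, hy⟩, rfl⟩⟩
  set G : κ.ord.ToType → lam.ord.ToType :=
    (wellFounded_lt).fix (fun z ih => (hF z ih).choose) with hG
  have hGeq : ∀ z, G z = (hF z fun y _ => G y).choose := fun z =>
    WellFounded.fix_eq _ _ z
  have hGstep : ∀ z' z : κ.ord.ToType, z' < z → step (G z') < G z := by
    intro z' z h
    have h2 := (hF z fun y _ => G y).choose_spec z' h
    rwa [← hGeq z] at h2
  have hGmono : StrictMono G := fun z' z h =>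
    lt_trans (hstep1 (G z')) (hGstep z' z h)
  -- the critical point
  obtain ⟨ub, hub⟩ := bdd hlreg (s := Set.range G)
    (mk_range_le.trans_lt (by rw [mk_toType_eq]; exact hκl))
  have hUBne : {b : lam.ord.ToType | ∀ z, G z < b}.Nonempty :=
    ⟨ub, fun z => hub _ ⟨z, rfl⟩⟩
  set α := (wellFounded_lt (α := lam.ord.ToType)).min _ hUBne with hα
  have hαub : ∀ z, G z < α := (wellFounded_lt).min_mem _ hUBne
  have hsucc : ∀ z : κ.ord.ToType, ∃ z₂, z < z₂ := by
    intro z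
    obtain ⟨z₂, hz₂⟩ := bdd hreg (s := {z}) (by
      rw [mk_singleton]; exact one_lt_aleph0.trans_le hreg.aleph0_le)
    exact ⟨z₂, hz₂ z rfl⟩
  have hbelow : ∀ β < α, ∃ z, β < G z := by
    intro β hβ
    have hβUB : β ∉ {b : lam.ord.ToType | ∀ z, G z < b} := fun hmem =>
      (wellFounded_lt).not_lt_min _ hmem hβ
    simp only [Set.mem_setOf_eq, not_forall, not_lt] at hβUB
    obtain ⟨z, hz⟩ := hβUB
    obtain ⟨z₂, hz₂⟩ := hsucc z
    exact ⟨z₂, hz.trans_lt (hGmono hz₂)⟩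
  -- bound the trace of α
  have hch : ∀ y : (A α ∩ Set.Iio α : Set _), ∃ z : κ.ord.ToType, (y : lam.ord.ToType) < G z :=
    fun y => hbelow y.1 y.2.2
  choose hfun hhfun using hch
  obtain ⟨zs, hzs⟩ := bdd hreg (s := Set.range hfun) (mk_range_le.trans_lt
    (lt_of_le_of_lt (mk_le_mk_of_subset Set.inter_subset_left) (hA α)))
  have htrace : A α ∩ Set.Iio α ⊆ Set.Iio (G zs) := by
    intro y hy
    exact lt_trans (hhfun ⟨y, hy⟩) (hGmono (hzs _ ⟨⟨y, hy⟩, rfl⟩))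
  have h1 : α < step (G zs) := hstep2 (G zs) α htrace
  obtain ⟨z₂, hz₂⟩ := hsucc zs
  exact absurd (hαub z₂) (not_lt.2 (le_of_lt (lt_trans h1 (hGstep zs z₂ hz₂))))

end DeltaSys

namespace DeltaSys
variable {κ : Cardinal.{0}}

lemma stepC (hreg : κ.IsRegular) {lam : Cardinal.{0}} (hlreg : lam.IsRegular) (hκl : κ < lam)
    (A : lam.ord.ToType → Set lam.ord.ToType) (hA : ∀ x, #(A x) < κ)
    (T : Set lam.ord.ToType) (hT : #T = lam) :
    ∃ B ⊆ T, #B = lam ∧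
      ∀ x y : lam.ord.ToType, x ∈ B → y ∈ B → x < y → A x ⊆ Set.Iio y := by
  -- a bound function
  have hh : ∀ x : lam.ord.ToType, ∃ b, x < b ∧ A x ⊆ Set.Iio b := by
    intro x
    obtain ⟨b, hb⟩ := bdd hlreg (s := insert x (A x)) (by
      refine (mk_insert_le).trans_lt ?_
      exact Cardinal.add_lt_of_lt hlreg.aleph0_le ((hA x).trans hκl)
        (one_lt_aleph0.trans_le hlreg.aleph0_le))
    exact ⟨b, hb x (Set.mem_insert _ _), fun a ha => hb a (Set.mem_insert_of_mem _ ha)⟩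
  choose h hh1 hh2 using hh
  -- recursion of length lam
  have hne : ∀ (z : lam.ord.ToType) (ih : ∀ y, y < z → lam.ord.ToType),
      (T \ ⋃ p : Set.Iio z, Set.Iio (h (ih p.1 p.2))).Nonempty := by
    intro z ih
    rw [Set.nonempty_iff_ne_empty]
    intro hemp
    have hsub : T ⊆ ⋃ p : Set.Iio z, Set.Iio (h (ih p.1 p.2)) := by
      intro t ht
      by_contra hmem
      exact Set.eq_empty_iff_forall_notMem.1 hemp t ⟨ht, hmem⟩
    have : lam ≤ #(⋃ p : Set.Iio z, Set.Iio (h (ih p.1 p.2))) := by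
      exact hT.symm.trans_le (mk_le_mk_of_subset hsub)
    refine absurd this (not_le.2 (lt_of_le_of_lt mk_iUnion_le_sum_mk ?_))
    apply Cardinal.sum_lt_of_isRegular hlreg (Cardinal.mk_Iio_ord_toType z)
    intro p
    exact Cardinal.mk_Iio_ord_toType _
  set e : lam.ord.ToType → lam.ord.ToType :=
    (wellFounded_lt).fix (fun z ih => (wellFounded_lt).min _ (hne z ih)) with he
  have heeq : ∀ z, e z = (wellFounded_lt).min _ (hne z fun y _ => e y) := fun z =>
    WellFounded.fix_eq _ _ z
  have hmem : ∀ z, e z ∈ T \ ⋃ p : Set.Iio z, Set.Iio (h (e p.1)) := by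
    intro z
    rw [heeq z]
    exact (wellFounded_lt).min_mem _ (hne z fun y _ => e y)
  have hmono : StrictMono e := by
    intro y z hyz
    have h2 := (hmem z).2
    rw [Set.mem_iUnion] at h2
    push_neg at h2
    have h3 := h2 ⟨y, hyz⟩
    rw [Set.mem_Iio, not_lt] at h3
    exact lt_of_lt_of_le (hh1 (e y)) h3
  refine ⟨Set.range e, ?_, ?_, ?_⟩
  · rintro _ ⟨z, rfl⟩
    exact (hmem z).1
  · rw [Cardinal.mk_range_eq _ hmono.injective, mk_toType_eq]
  · rintro _ _ ⟨y, rfl⟩ ⟨z, rfl⟩ hlt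
    have hyz : y < z := hmono.lt_iff_lt.1 hlt
    intro a ha
    have h2 := (hmem z).2
    rw [Set.mem_iUnion] at h2
    push_neg at h2
    have h3 := h2 ⟨y, hyz⟩
    rw [Set.mem_Iio, not_lt] at h3
    exact lt_of_lt_of_le (hh2 (e y) ha) h3

end DeltaSys

namespace DeltaSys
variable {κ : Cardinal.{0}}

lemma main_O (hreg : κ.IsRegular) (hunc : ℵ₀ < κ)
    (A : (Order.succ (2 ^< κ)).ord.ToType → Set ((Order.succ (2 ^< κ)).ord.ToType))
    (hA : ∀ x, #(A x) < κ) :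
    ∃ B : Set ((Order.succ (2 ^< κ)).ord.ToType), #B = Order.succ (2 ^< κ) ∧
      ∃ R : Set ((Order.succ (2 ^< κ)).ord.ToType),
        ∀ i ∈ B, ∀ j ∈ B, i ≠ j → A i ∩ A j = R := by
  have hlreg : (Order.succ (2 ^< κ)).IsRegular := Cardinal.isRegular_succ (mu_inf hunc).le
  have hκl : κ < Order.succ (2 ^< κ) := (kappa_le_mu hunc).trans_lt (Order.lt_succ _)
  obtain ⟨β, hβ⟩ := stepA hreg hlreg hκl A hA
  set T1 : Set ((Order.succ (2 ^< κ)).ord.ToType) :=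
    {x | A x ∩ Set.Iio x ⊆ Set.Iio β} ∩ Set.Ici β with hT1def
  have hT1 : #T1 = Order.succ (2 ^< κ) := by
    refine le_antisymm ((mk_le_mk_of_subset (Set.subset_univ _)).trans
      (by rw [mk_univ, mk_toType_eq])) ?_
    by_contra hlt
    push_neg at hlt
    have hsub : {x | A x ∩ Set.Iio x ⊆ Set.Iio β} ⊆ T1 ∪ Set.Iio β := by
      intro x hx
      rcases lt_or_ge x β with h | h
      · exact Or.inr h
      · exact Or.inl ⟨hx, h⟩
    have : Order.succ (2 ^< κ) ≤ #(T1 ∪ Set.Iio β : Set _) :=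
      hβ.symm.trans_le (mk_le_mk_of_subset hsub)
    refine absurd this (not_le.2 (lt_of_le_of_lt (mk_union_le _ _) ?_))
    exact Cardinal.add_lt_of_lt hlreg.aleph0_le hlt (Cardinal.mk_Iio_ord_toType β)
  -- step B : pigeonhole on the trace
  have hWle : #(Set.Iio β) ≤ 2 ^< κ :=
    Order.lt_succ_iff.1 (Cardinal.mk_Iio_ord_toType β)
  have hDle : #{s : Set (Set.Iio β : Set _) // #s < κ} ≤ 2 ^< κ := count hreg hunc hWle
  set f : T1 → {s : Set (Set.Iio β : Set _) // #s < κ} := fun x =>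
    ⟨Subtype.val ⁻¹' (A x.1), by
      refine lt_of_le_of_lt ?_ (hA x.1)
      exact Cardinal.mk_preimage_of_injective _ _ Subtype.val_injective⟩ with hfdef
  obtain ⟨a, t, hta, htcard, htval⟩ := Cardinal.infinite_pigeonhole_set f (Order.succ (2 ^< κ))
    hT1.ge hlreg.aleph0_le (by rw [hlreg.cof_eq]; exact hDle.trans_lt (Order.lt_succ _))
  have htcard' : #t = Order.succ (2 ^< κ) := le_antisymm
    ((mk_le_mk_of_subset (Set.subset_univ _)).trans (by rw [mk_univ, mk_toType_eq])) htcard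
  set R0 : Set ((Order.succ (2 ^< κ)).ord.ToType) := Subtype.val '' a.1 with hR0
  -- key facts for x ∈ t
  have hkey : ∀ x ∈ t, A x ∩ Set.Iio x = R0 ∧ R0 ⊆ A x := by
    intro x hx
    have hxT : A x ∩ Set.Iio x ⊆ Set.Iio β := (hta hx).1
    have hxI : β ≤ x := (hta hx).2
    have himg : Subtype.val '' (Subtype.val ⁻¹' (A x) : Set (Set.Iio β : Set _)) =
        A x ∩ Set.Iio β := by
      rw [Subtype.image_preimage_coe, Set.inter_comm]
    have hfa : (Subtype.val ⁻¹' (A x) : Set (Set.Iio β : Set _)) = a.1 := by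
      have := htval hx
      rw [hfdef] at this
      exact congrArg Subtype.val this
    have htr : A x ∩ Set.Iio β = R0 := by
      rw [← himg, hfa]
    have heq : A x ∩ Set.Iio x = A x ∩ Set.Iio β := by
      apply subset_antisymm
      · exact fun y hy => ⟨hy.1, hxT hy⟩
      · exact fun y hy => ⟨hy.1, lt_of_lt_of_le hy.2 hxI⟩
    constructor
    · rw [heq, htr]
    · rw [← htr]
      exact Set.inter_subset_left
  -- step C : separation
  obtain ⟨B, hBt, hBcard, hBsep⟩ := stepC hreg hlreg hκl A hA t htcard'
  refine ⟨B, hBcard, R0, ?_⟩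
  have hmain : ∀ i ∈ B, ∀ j ∈ B, i < j → A i ∩ A j = R0 := by
    intro i hi j hj hij
    obtain ⟨hieq, hisub⟩ := hkey i (hBt hi)
    obtain ⟨hjeq, hjsub⟩ := hkey j (hBt hj)
    apply subset_antisymm
    · intro y hy
      have : y ∈ Set.Iio j := hBsep i j hi hj hij hy.1
      rw [← hjeq]
      exact ⟨hy.2, this⟩
    · exact fun y hy => ⟨hisub hy, hjsub hy⟩
  intro i hi j hj hij
  rcases hij.lt_or_gt with h | h
  · exact hmain i hi j hj h
  · rw [Set.inter_comm]
    exact hmain j hj i hi h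

end DeltaSys


/-- Generalized Δ-system lemma: for κ regular uncountable and λ = (2^{<κ})⁺,
any λ-indexed family of sets of size < κ has a subfamily of size λ forming a
Δ-system. -/
theorem generalized_delta_system_lemma (κ : Cardinal) (hreg : κ.IsRegular)
    (hunc : Cardinal.aleph0 < κ)
    (ι : Type) (hι : #ι = Order.succ (2 ^< κ))
    (α : Type) (A : ι → Set α) (hA : ∀ i, #(A i) < κ) :
    ∃ B : Set ι, #B = Order.succ (2 ^< κ) ∧
      ∃ R : Set α, ∀ i ∈ B, ∀ j ∈ B, i ≠ j → A i ∩ A j = R := by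
  classical
  have hunc' : ℵ₀ < κ := hunc
  have hlreg : (Order.succ (2 ^< κ)).IsRegular := Cardinal.isRegular_succ (DeltaSys.mu_inf hunc').le
  have hκl : κ < Order.succ (2 ^< κ) := (DeltaSys.kappa_le_mu hunc').trans_lt (Order.lt_succ _)
  have hiO : #ι = #((Order.succ (2 ^< κ)).ord.ToType) := by rw [hι, DeltaSys.mk_toType_eq]
  obtain ⟨eι⟩ := Cardinal.eq.mp hiO
  set U : Set α := ⋃ i, A i with hUdef
  have hU : #U ≤ #((Order.succ (2 ^< κ)).ord.ToType) := by
    rw [DeltaSys.mk_toType_eq]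
    calc #U ≤ Cardinal.sum fun i => #(A i) := mk_iUnion_le_sum_mk
      _ ≤ Cardinal.sum fun _ : ι => κ := Cardinal.sum_le_sum _ _ fun i => (hA i).le
      _ = #ι * κ := Cardinal.sum_const' _ _
      _ ≤ Order.succ (2 ^< κ) * Order.succ (2 ^< κ) := by
          rw [hι]; exact mul_le_mul_right hκl.le _
      _ = Order.succ (2 ^< κ) := Cardinal.mul_eq_self hlreg.aleph0_le
  obtain ⟨e⟩ := (Cardinal.le_def _ _).mp hU
  set A' : (Order.succ (2 ^< κ)).ord.ToType → Set ((Order.succ (2 ^< κ)).ord.ToType) :=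
    fun x => e '' {u : U | (u : α) ∈ A (eι.symm x)} with hA'def
  have hA' : ∀ x, #(A' x) < κ := by
    intro x
    refine lt_of_le_of_lt mk_image_le ?_
    refine lt_of_le_of_lt ?_ (hA (eι.symm x))
    exact Cardinal.mk_le_of_injective (f := fun u : {u : U // (u : α) ∈ A (eι.symm x)} =>
      (⟨u.1.1, u.2⟩ : A (eι.symm x))) (fun u v huv => by
        simp only [Subtype.mk.injEq] at huv
        exact Subtype.ext (Subtype.ext huv))
  obtain ⟨B', hB'card, R', hR'⟩ := DeltaSys.main_O hreg hunc' A' hA'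
  refine ⟨eι ⁻¹' B', ?_, ?_⟩
  · have himg : eι.symm '' B' = eι ⁻¹' B' := by
      rw [Equiv.image_eq_preimage_symm]
      simp
    rw [← himg, Cardinal.mk_image_eq eι.symm.injective, hB'card]
  · refine ⟨{b : α | ∃ u : U, (u : α) = b ∧ e u ∈ R'}, ?_⟩
    intro i hi j hj hij
    have hBij : A' (eι i) ∩ A' (eι j) = R' :=
      hR' (eι i) hi (eι j) hj (fun hc => hij (eι.injective hc))
    ext b
    constructor
    · rintro ⟨hbi, hbj⟩
      have hbU : b ∈ U := Set.mem_iUnion.2 ⟨i, hbi⟩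
      have h1 : e ⟨b, hbU⟩ ∈ A' (eι i) :=
        ⟨⟨b, hbU⟩, by simp only [Set.mem_setOf_eq, Equiv.symm_apply_apply]; exact hbi, rfl⟩
      have h2 : e ⟨b, hbU⟩ ∈ A' (eι j) :=
        ⟨⟨b, hbU⟩, by simp only [Set.mem_setOf_eq, Equiv.symm_apply_apply]; exact hbj, rfl⟩
      have : e ⟨b, hbU⟩ ∈ R' := by rw [← hBij]; exact ⟨h1, h2⟩
      exact ⟨⟨b, hbU⟩, rfl, this⟩
    · rintro ⟨u, rfl, huR⟩
      have hmem : e u ∈ A' (eι i) ∩ A' (eι j) := by rw [hBij]; exact huR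
      obtain ⟨⟨u1, hu1, hu1e⟩, ⟨u2, hu2, hu2e⟩⟩ := hmem
      have he1 : u1 = u := e.injective hu1e
      have he2 : u2 = u := e.injective hu2e
      rw [he1] at hu1
      rw [he2] at hu2
      simp only [Set.mem_setOf_eq, Equiv.symm_apply_apply] at hu1 hu2
      exact ⟨hu1, hu2⟩
end
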